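/- Let R be the random graph and let K ⊆ Aut(R) be compact. Define the graph E on V by x E y iff there exists h ∈ K with h(x) = y or h⁻¹(x) = y, and let d_K(x,y) be the E-graph distance (∞ if no path). Then d_K is an extended metric on V, and for every finite set M ⊆ V, every τ : M → 2, and every r ∈ ℕ, there exists a vertex v realizing τ with d_K(v, M) > r. -/

import Mathlib

/-- The defining extension property of the random (Rado) graph. -/
def ExtensionProperty {V : Type*} (G : SimpleGraph V) : Prop :=
  ∀ A B : Finset V, Disjoint A B →
    ∃ v : V, (∀ a ∈ A, G.Adj a v) ∧ (∀ b ∈ B, ¬ G.Adj b v)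

/-- The pointwise convergence topology on the automorphism group of a graph. -/
def autTopology {V : Type*} (G : SimpleGraph V) : TopologicalSpace (G ≃g G) :=
  letI : TopologicalSpace V := ⊥
  TopologicalSpace.induced (fun f => ((f : V → V), (f.symm : V → V))) inferInstance

/-- `v` realizes `τ` over `M`. -/
def Realizes {V : Type*} (G : SimpleGraph V) (M : Finset V) (τ : V → Bool) (v : V) : Prop :=
  ∀ w ∈ M, (G.Adj w v ↔ τ w = true)

/-- The graph `E` on `V` associated to `K ⊆ Aut(R)`: `x E y` iff some `h ∈ K` has
`h x = y` or `h⁻¹ x = y`. -/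
def kGraph {V : Type*} (G : SimpleGraph V) (K : Set (G ≃g G)) : SimpleGraph V :=
  SimpleGraph.fromRel (fun x y => ∃ h ∈ K, h x = y ∨ h.symm x = y)

-- neighbor sets of kGraph are finite
lemma kGraph_nbr_finite {V : Type*} (G : SimpleGraph V)
    (K : Set (G ≃g G)) (hK : @IsCompact _ (autTopology G) K) (x : V) :
    ((kGraph G K).neighborSet x).Finite := by
  letI : TopologicalSpace V := ⊥
  haveI : DiscreteTopology V := ⟨rfl⟩
  letI : TopologicalSpace (G ≃g G) := autTopology G
  have hcont : Continuous (fun f : G ≃g G => ((f : V → V), (f.symm : V → V))) :=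
    continuous_induced_dom
  have h1 : ((fun h : G ≃g G => h x) '' K).Finite := by
    have : Continuous (fun h : G ≃g G => h x) :=
      ((continuous_apply x).comp continuous_fst).comp hcont
    exact (hK.image this).finite_of_discrete
  have h2 : ((fun h : G ≃g G => h.symm x) '' K).Finite := by
    have : Continuous (fun h : G ≃g G => h.symm x) :=
      ((continuous_apply x).comp continuous_snd).comp hcont
    exact (hK.image this).finite_of_discrete
  refine (h1.union h2).subset ?_
  rintro y hy
  rw [SimpleGraph.mem_neighborSet, kGraph, SimpleGraph.fromRel_adj] at hy
  obtain ⟨hne, ⟨h, hKh, rfl | rfl⟩ | ⟨h, hKh, hh⟩⟩ := hy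
  · exact Or.inl ⟨h, hKh, rfl⟩
  · exact Or.inr ⟨h, hKh, rfl⟩
  · rcases hh with hh | hh
    · exact Or.inr ⟨h, hKh, by simp [← hh]⟩
    · exact Or.inl ⟨h, hKh, by simp [← hh]⟩

lemma ball_finite {V : Type*} (G' : SimpleGraph V)
    (hnb : ∀ x : V, (G'.neighborSet x).Finite) (m : V) (r : ℕ) :
    {v : V | ∃ p : G'.Walk v m, p.length ≤ r}.Finite := by
  induction r with
  | zero =>
    refine Set.Finite.subset (Set.finite_singleton m) ?_
    rintro v ⟨p, hp⟩
    exact (SimpleGraph.Walk.eq_of_length_eq_zero (Nat.le_zero.mp hp))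
  | succ r ih =>
    refine Set.Finite.subset (ih.union (Set.Finite.biUnion ih fun u _ => hnb u)) ?_
    rintro v ⟨p, hp⟩
    cases p with
    | nil => exact Or.inl ⟨SimpleGraph.Walk.nil, Nat.zero_le r⟩
    | cons h q =>
      have hq : q.length ≤ r := by
        simpa [Nat.succ_le_succ_iff] using hp
      exact Or.inr (Set.mem_biUnion ⟨q, hq⟩ h.symm)



/-- `d_K` (the `E`-graph extended distance) is an extended metric, and every finite
adjacency pattern is realized by a vertex at `d_K`-distance `> r` from `M`. -/
theorem dK_metric_and_far_realization {V : Type*} [Countable V] [Infinite V]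
    (G : SimpleGraph V) (hG : ExtensionProperty G)
    (K : Set (G ≃g G)) (hK : @IsCompact _ (autTopology G) K) :
    (∀ x : V, (kGraph G K).edist x x = 0) ∧
    (∀ x y : V, (kGraph G K).edist x y = (kGraph G K).edist y x) ∧
    (∀ x y z : V,
      (kGraph G K).edist x z ≤ (kGraph G K).edist x y + (kGraph G K).edist y z) ∧
    (∀ M : Finset V, ∀ τ : V → Bool, ∀ r : ℕ,
      ∃ v : V, Realizes G M τ v ∧ ∀ w ∈ M, (r : ℕ∞) < (kGraph G K).edist v w) := by
  refine ⟨fun x => SimpleGraph.edist_self, fun x y => SimpleGraph.edist_comm,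
    fun x y z => SimpleGraph.edist_triangle, ?_⟩
  intro M τ r
  classical
  -- the ball of radius r around M is finite
  have hball : {v : V | ∃ w ∈ M, (kGraph G K).edist v w ≤ (r : ℕ∞)}.Finite := by
    have : {v : V | ∃ w ∈ M, (kGraph G K).edist v w ≤ (r : ℕ∞)} ⊆
        ⋃ w ∈ (M : Set V), {v : V | ∃ p : (kGraph G K).Walk v w, p.length ≤ r} := by
      rintro v ⟨w, hwM, hle⟩
      have hne : (kGraph G K).edist v w ≠ ⊤ := by
        intro h; rw [h] at hle; exact (ENat.coe_lt_top r).not_ge hle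
      obtain ⟨p, hp⟩ := SimpleGraph.exists_walk_of_edist_ne_top hne
      refine Set.mem_biUnion hwM ⟨p, ?_⟩
      have := hp ▸ hle
      exact_mod_cast this
    exact Set.Finite.subset
      (Set.Finite.biUnion M.finite_toSet fun w _ =>
        ball_finite _ (kGraph_nbr_finite G K hK) w r) this
  obtain ⟨F, hF⟩ := hball.exists_finset_coe
  -- M ⊆ F
  have hMF : ∀ w ∈ M, w ∈ F := by
    intro w hw
    have : w ∈ (F : Set V) := by
      rw [hF]; exact ⟨w, hw, by simp [SimpleGraph.edist_self]⟩
    exact_mod_cast this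
  -- step 1: find u adjacent to everything in F
  obtain ⟨u, hu, -⟩ := hG F ∅ (Finset.disjoint_empty_right F)
  have huF : u ∉ F := fun h => (G.loopless.irrefl u) (hu u h)
  -- step 2: find v realizing τ avoiding u
  have hdisj : Disjoint (M.filter fun w => τ w = true)
      ((M.filter fun w => τ w = false) ∪ {u}) := by
    rw [Finset.disjoint_union_right]
    constructor
    · simp +contextual [Finset.disjoint_left, Finset.mem_filter]
    · simp only [Finset.disjoint_singleton_right, Finset.mem_filter]
      exact fun ⟨hM, _⟩ => huF (hMF u hM)
  obtain ⟨v, hvA, hvB⟩ := hG _ _ hdisj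
  refine ⟨v, ?_, ?_⟩
  · intro w hw
    cases hτ : τ w with
    | false =>
      simp only [Bool.false_eq_true, iff_false]
      exact hvB w (Finset.mem_union_left _ (Finset.mem_filter.mpr ⟨hw, hτ⟩))
    | true =>
      simp only [iff_true]
      exact hvA w (Finset.mem_filter.mpr ⟨hw, hτ⟩)
  · intro w hw
    by_contra hle
    push_neg at hle
    have hvF : v ∈ (F : Set V) := by rw [hF]; exact ⟨w, hw, hle⟩
    have : G.Adj u v := (hu v (by exact_mod_cast hvF)).symm
    exact hvB u (Finset.mem_union_right _ (Finset.mem_singleton_self u)) this
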